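/- Let 0 < λ₁ < λ₂, ε₀ > 0, and Ω₁, Ω₂ > 0. Define g(ρ₁, ρ₂) = 1 − (λ₂/(λ₂ + ε₀·ρ₂·λ₁/ρ₁)) · exp( −λ₁(ε₀ + ε₀²)/ρ₁ − λ₂ε₀/ρ₂ ) for ρ₁, ρ₂ > 0, and set ρ₂⁺ = (ε₀λ₁λ₂ + λ₂·√(4Ω₁λ₁ + ε₀²λ₁²)) / (2λ₁). Then (ρ₁*, ρ₂*) = (Ω₁, min(Ω₂, ρ₂⁺)) is a global minimizer of g over (0, Ω₁] × (0, Ω₂]: g(ρ₁*, ρ₂*) ≤ g(ρ₁, ρ₂) for all (ρ₁, ρ₂) ∈ (0, Ω₁] × (0, Ω₂]. -/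

import Mathlib

open Real Set

set_option maxHeartbeats 1000000 in
/-- Corollary 3 (optimal dynamic power control for uplink NOMA): for `0 < l₁ < l₂`,
`ε₀ > 0` and power constraints `Ω₁, Ω₂ > 0`, the common outage probability
`g(ρ₁, ρ₂) = 1 - (l₂/(l₂ + ε₀ρ₂l₁/ρ₁)) exp(-l₁(ε₀+ε₀²)/ρ₁ - l₂ε₀/ρ₂)` on
`(0, Ω₁] × (0, Ω₂]` is globally minimized at `(Ω₁, min(Ω₂, ρ₂⁺))`, where
`ρ₂⁺ = (ε₀l₁l₂ + l₂√(4Ω₁l₁ + ε₀²l₁²))/(2l₁)`. -/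
theorem uplink_noma_optimal_power_control
    (l₁ l₂ ε₀ W₁ W₂ : ℝ) (hl₁ : 0 < l₁) (hl₁₂ : l₁ < l₂) (hε₀ : 0 < ε₀)
    (hW₁ : 0 < W₁) (hW₂ : 0 < W₂)
    (g : ℝ → ℝ → ℝ)
    (hg : ∀ ρ₁ ρ₂, 0 < ρ₁ → 0 < ρ₂ → g ρ₁ ρ₂ =
      1 - (l₂ / (l₂ + ε₀ * ρ₂ * l₁ / ρ₁)) *
        Real.exp (-(l₁ * (ε₀ + ε₀ ^ 2) / ρ₁) - l₂ * ε₀ / ρ₂))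
    (ρ₂p : ℝ)
    (hρ₂p : ρ₂p = (ε₀ * l₁ * l₂ + l₂ * Real.sqrt (4 * W₁ * l₁ + ε₀ ^ 2 * l₁ ^ 2)) /
      (2 * l₁)) :
    ∀ ρ₁ ∈ Set.Ioc 0 W₁, ∀ ρ₂ ∈ Set.Ioc 0 W₂, g W₁ (min W₂ ρ₂p) ≤ g ρ₁ ρ₂ := by
  have hl₂ : 0 < l₂ := hl₁.trans hl₁₂
  -- the square root
  set D : ℝ := 4 * W₁ * l₁ + ε₀ ^ 2 * l₁ ^ 2 with hD
  have hDpos : 0 < D := by positivity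
  have ht0 : 0 ≤ Real.sqrt D := Real.sqrt_nonneg D
  have ht2 : Real.sqrt D ^ 2 = D := Real.sq_sqrt hDpos.le
  have htlow : ε₀ * l₁ < Real.sqrt D := by
    nlinarith [Real.sq_sqrt hDpos.le, ht0, mul_pos hW₁ hl₁]
  have hrpos : 0 < ρ₂p := by
    rw [hρ₂p]
    have : 0 < ε₀ * l₁ * l₂ + l₂ * Real.sqrt D := by positivity
    positivity
  -- coefficients
  set a : ℝ := ε₀ * l₁ / W₁ with ha
  set b : ℝ := ε₀ * l₂ with hb
  have hapos : 0 < a := by positivity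
  have hbpos : 0 < b := by positivity
  -- quadratic relation satisfied by r
  have hρ' : 2 * l₁ * ρ₂p = ε₀ * l₁ * l₂ + l₂ * Real.sqrt D := by
    rw [hρ₂p]; field_simp
  have ht2' : Real.sqrt D ^ 2 = 4 * W₁ * l₁ + ε₀ ^ 2 * l₁ ^ 2 := by rw [ht2, hD]
  have qrel0 : l₁ * ρ₂p ^ 2 = ε₀ * l₁ * l₂ * ρ₂p + l₂ ^ 2 * W₁ := by
    have key : (4 * l₁) * (l₁ * ρ₂p ^ 2) = (4 * l₁) * (ε₀ * l₁ * l₂ * ρ₂p + l₂ ^ 2 * W₁) := by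
      linear_combination (2 * l₁ * ρ₂p - ε₀ * l₁ * l₂ + l₂ * Real.sqrt D) * hρ'
        + l₂ ^ 2 * ht2'
    exact mul_left_cancel₀ (by positivity : (4 * l₁) ≠ 0) key
  have qrel : a * ρ₂p ^ 2 = a * b * ρ₂p + b * l₂ := by
    rw [ha, hb]
    field_simp
    linear_combination qrel0
  have hrb : b < ρ₂p := by nlinarith [qrel, mul_pos hapos hrpos]
  -- the auxiliary function
  set h : ℝ → ℝ := fun x => -Real.log (l₂ + a * x) - b / x with hh
  have hden : ∀ x : ℝ, 0 < x → 0 < l₂ + a * x := fun x hx => by positivity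
  have hderiv : ∀ x : ℝ, 0 < x →
      HasDerivAt h (b / x ^ 2 - a / (l₂ + a * x)) x := by
    intro x hx
    have h1 : HasDerivAt (fun y : ℝ => l₂ + a * y) a x := by
      simpa using ((hasDerivAt_id x).const_mul a).const_add l₂
    have h2 : HasDerivAt (fun y : ℝ => Real.log (l₂ + a * y))
        ((l₂ + a * x)⁻¹ * a) x :=
      by have := (Real.hasDerivAt_log (hden x hx).ne').comp x h1; exact this
    have h3 : HasDerivAt (fun y : ℝ => b / y) (b * (-(x ^ 2)⁻¹)) x := by
      simpa [div_eq_mul_inv] using (hasDerivAt_inv hx.ne').const_mul b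
    have := (h2.neg).sub h3
    exact this.congr_deriv (by ring)
  have hdiffOn : ∀ x : ℝ, 0 < x → DifferentiableAt ℝ h x := fun x hx =>
    (hderiv x hx).differentiableAt
  have hderiv_eq : ∀ x : ℝ, 0 < x →
      deriv h x = b / x ^ 2 - a / (l₂ + a * x) := fun x hx => (hderiv x hx).deriv
  -- monotone on (0, r]
  have hmono : MonotoneOn h (Set.Ioc 0 ρ₂p) := by
    apply monotoneOn_of_deriv_nonneg (convex_Ioc 0 ρ₂p)
    · exact fun x hx => (hdiffOn x hx.1).continuousAt.continuousWithinAt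
    · intro x hx
      rw [interior_Ioc] at hx
      exact (hdiffOn x hx.1).differentiableWithinAt
    · intro x hx
      rw [interior_Ioc] at hx
      obtain ⟨hx1, hx2⟩ := hx
      rw [hderiv_eq x hx1, sub_nonneg, div_le_div_iff₀ (hden x hx1) (by positivity)]
      nlinarith [mul_nonneg (mul_nonneg hapos.le (sub_nonneg.2 hx2.le))
        (by nlinarith [hx1, hrb] : (0:ℝ) ≤ x + ρ₂p - b), qrel]
  -- antitone on [r, ∞)
  have hanti : AntitoneOn h (Set.Ici ρ₂p) := by
    apply antitoneOn_of_deriv_nonpos (convex_Ici ρ₂p)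
    · exact fun x hx => (hdiffOn x (hrpos.trans_le hx)).continuousAt.continuousWithinAt
    · intro x hx
      rw [interior_Ici] at hx
      exact (hdiffOn x (hrpos.trans hx)).differentiableWithinAt
    · intro x hx
      rw [interior_Ici] at hx
      have hx0 : 0 < x := hrpos.trans hx
      rw [hderiv_eq x hx0, sub_nonpos, div_le_div_iff₀ (by positivity) (hden x hx0)]
      nlinarith [mul_nonneg (mul_nonneg hapos.le (sub_nonneg.2 hx.le))
        (by nlinarith [hx0, hrb] : (0:ℝ) ≤ x + ρ₂p - b), qrel]
  -- rewriting g W₁ x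
  have hgW : ∀ x : ℝ, 0 < x → g W₁ x =
      1 - l₂ * Real.exp (-(l₁ * (ε₀ + ε₀ ^ 2) / W₁)) * Real.exp (h x) := by
    intro x hx
    rw [hg W₁ x hW₁ hx]
    have hax : ε₀ * x * l₁ / W₁ = a * x := by rw [ha]; ring
    have hbx : l₂ * ε₀ / x = b / x := by rw [hb]; ring
    rw [hax, hbx, hh]
    have : Real.exp (-Real.log (l₂ + a * x) - b / x)
        = (l₂ + a * x)⁻¹ * Real.exp (-(b / x)) := by
      rw [sub_eq_add_neg, Real.exp_add, Real.exp_neg, Real.exp_log (hden x hx)]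
    rw [this]
    have : -(l₁ * (ε₀ + ε₀ ^ 2) / W₁) - b / x
        = (-(l₁ * (ε₀ + ε₀ ^ 2) / W₁)) + (-(b / x)) := by ring
    rw [this, Real.exp_add, div_eq_mul_inv]
    ring
  intro ρ₁ hρ₁ ρ₂ hρ₂
  obtain ⟨hρ₁0, hρ₁W⟩ := hρ₁
  obtain ⟨hρ₂0, hρ₂W⟩ := hρ₂
  set m : ℝ := min W₂ ρ₂p with hm
  have hm0 : 0 < m := lt_min hW₂ hrpos
  -- Step A : g W₁ m ≤ g W₁ ρ₂
  have stepA : g W₁ m ≤ g W₁ ρ₂ := by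
    rw [hgW m hm0, hgW ρ₂ hρ₂0]
    have key : h ρ₂ ≤ h m := by
      rcases le_or_gt ρ₂ m with hcase | hcase
      · exact hmono ⟨hρ₂0, le_trans hcase (min_le_right _ _)⟩
          ⟨hm0, min_le_right _ _⟩ hcase
      · have hmr : m = ρ₂p := by
          rcases min_cases W₂ ρ₂p with ⟨h1, h2⟩ | ⟨h1, h2⟩
          · exact absurd (hρ₂W.trans_lt (h1 ▸ hcase)) (lt_irrefl ρ₂)
          · exact h1
        have hle : ρ₂p ≤ ρ₂ := by rw [← hmr]; exact hcase.le
        rw [hmr]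
        exact hanti Set.self_mem_Ici hle hle
    have hc : (0:ℝ) ≤ l₂ * Real.exp (-(l₁ * (ε₀ + ε₀ ^ 2) / W₁)) := by positivity
    exact sub_le_sub_left (mul_le_mul_of_nonneg_left (Real.exp_le_exp.2 key) hc) 1
  -- Step B : g W₁ ρ₂ ≤ g ρ₁ ρ₂
  have stepB : g W₁ ρ₂ ≤ g ρ₁ ρ₂ := by
    rw [hg W₁ ρ₂ hW₁ hρ₂0, hg ρ₁ ρ₂ hρ₁0 hρ₂0]
    have h1 : l₂ / (l₂ + ε₀ * ρ₂ * l₁ / ρ₁) ≤ l₂ / (l₂ + ε₀ * ρ₂ * l₁ / W₁) := by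
      apply div_le_div_of_nonneg_left hl₂.le (by positivity)
      have : ε₀ * ρ₂ * l₁ / W₁ ≤ ε₀ * ρ₂ * l₁ / ρ₁ :=
        div_le_div_of_nonneg_left (by positivity) hρ₁0 hρ₁W
      linarith
    have h2 : Real.exp (-(l₁ * (ε₀ + ε₀ ^ 2) / ρ₁) - l₂ * ε₀ / ρ₂)
        ≤ Real.exp (-(l₁ * (ε₀ + ε₀ ^ 2) / W₁) - l₂ * ε₀ / ρ₂) := by
      apply Real.exp_le_exp.2
      have : l₁ * (ε₀ + ε₀ ^ 2) / W₁ ≤ l₁ * (ε₀ + ε₀ ^ 2) / ρ₁ :=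
        div_le_div_of_nonneg_left (by positivity) hρ₁0 hρ₁W
      linarith
    exact sub_le_sub_left (mul_le_mul h1 h2 (Real.exp_pos _).le (by positivity)) 1
  linarith
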